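/- The function G(x, x_u) = exp((log x · log x_u)/log q)·(−q^{1/2} x x_u²; q)_∞ satisfies the two q-difference equations G(qx, x_u)/G(x, x_u) = x_u/(1 + q^{1/2} x x_u²) and G(x, q^{1/2} x_u)/G(x, x_u) = x^{1/2}/(1 + q^{1/2} x x_u²). -/

import Mathlib

open Real

lemma aux_hasProd (q a : ℝ) (hq0 : 0 < q) (hq1 : q < 1) (ha : 0 < a) :
    HasProd (fun j : ℕ => 1 + a * q ^ j)
      (Real.exp (∑' j : ℕ, Real.log (1 + a * q ^ j))) := by
  have hpos : ∀ j : ℕ, (0:ℝ) < 1 + a * q ^ j := fun j => by positivity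
  have hsum : Summable (fun j : ℕ => Real.log (1 + a * q ^ j)) := by
    apply Summable.of_nonneg_of_le
      (fun j => Real.log_nonneg (by nlinarith [mul_pos ha (pow_pos hq0 j)]))
      (fun j => ?_) ((summable_geometric_of_lt_one hq0.le hq1).mul_left a)
    calc Real.log (1 + a * q ^ j) ≤ (1 + a * q ^ j) - 1 :=
          Real.log_le_sub_one_of_pos (hpos j)
      _ = a * q ^ j := by ring
  have h := hsum.hasSum.rexp
  have heq : (Real.exp ∘ fun j : ℕ => Real.log (1 + a * q ^ j)) =
      fun j : ℕ => 1 + a * q ^ j := by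
    funext j; simp [Real.exp_log (hpos j)]
  rwa [heq] at h

lemma aux_tprod_pos (q a : ℝ) (hq0 : 0 < q) (hq1 : q < 1) (ha : 0 < a) :
    0 < ∏' j : ℕ, (1 + a * q ^ j) := by
  rw [(aux_hasProd q a hq0 hq1 ha).tprod_eq]
  exact Real.exp_pos _

lemma aux_shift (q a : ℝ) (hq0 : 0 < q) (hq1 : q < 1) (ha : 0 < a) :
    (∏' j : ℕ, (1 + a * q ^ (j + 1)))
      = (∏' j : ℕ, (1 + a * q ^ j)) / (1 + a) := by
  have hm' : Multipliable (fun j : ℕ => 1 + a * q ^ (j + 1)) := by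
    have h := (aux_hasProd q (a * q) hq0 hq1 (by positivity)).multipliable
    refine h.congr fun j => ?_
    rw [pow_succ]; ring
  have h0 := tprod_eq_zero_mul' (f := fun j : ℕ => 1 + a * q ^ j) hm'
  norm_num at h0
  rw [eq_div_iff (by positivity : (0:ℝ) < 1 + a).ne', h0]; ring

theorem gluing_function_difference_equations (q x xu : ℝ)
    (hq0 : 0 < q) (hq1 : q < 1) (hx : 0 < x) (hxu : 0 < xu) :
    let G : ℝ → ℝ → ℝ := fun y yu =>
      Real.exp (Real.log y * Real.log yu / Real.log q) *
        ∏' j : ℕ, (1 + Real.sqrt q * y * yu ^ 2 * q ^ j)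
    G (q * x) xu / G x xu = xu / (1 + Real.sqrt q * x * xu ^ 2) ∧
      G x (Real.sqrt q * xu) / G x xu = Real.sqrt x / (1 + Real.sqrt q * x * xu ^ 2) := by
  intro G
  have ha : 0 < Real.sqrt q * x * xu ^ 2 := by positivity
  have hqlog : Real.log q ≠ 0 := ne_of_lt (Real.log_neg hq0 hq1)
  have hPpos := aux_tprod_pos q _ hq0 hq1 ha
  have hshift := aux_shift q _ hq0 hq1 ha
  have hbase : (∏' j : ℕ, (1 + Real.sqrt q * x * xu ^ 2 * q ^ j))
      = ∏' j : ℕ, (1 + Real.sqrt q * x * xu ^ 2 * q ^ j) := rfl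
  have hfac1 : (∏' j : ℕ, (1 + Real.sqrt q * (q * x) * xu ^ 2 * q ^ j))
      = (∏' j : ℕ, (1 + Real.sqrt q * x * xu ^ 2 * q ^ j))
          / (1 + Real.sqrt q * x * xu ^ 2) := by
    rw [← hshift]
    exact tprod_congr fun j => by ring
  have hsq : Real.sqrt q ^ 2 = q := Real.sq_sqrt hq0.le
  have hfac2 : (∏' j : ℕ, (1 + Real.sqrt q * x * (Real.sqrt q * xu) ^ 2 * q ^ j))
      = (∏' j : ℕ, (1 + Real.sqrt q * x * xu ^ 2 * q ^ j))
          / (1 + Real.sqrt q * x * xu ^ 2) := by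
    rw [← hshift]
    refine tprod_congr fun j => ?_
    rw [mul_pow, hsq, pow_succ]
    ring
  have h1a : (1:ℝ) + Real.sqrt q * x * xu ^ 2 > 0 := by positivity
  constructor
  · show Real.exp (Real.log (q * x) * Real.log xu / Real.log q) *
        (∏' j : ℕ, (1 + Real.sqrt q * (q * x) * xu ^ 2 * q ^ j)) /
      (Real.exp (Real.log x * Real.log xu / Real.log q) *
        (∏' j : ℕ, (1 + Real.sqrt q * x * xu ^ 2 * q ^ j))) = _
    rw [hfac1, Real.log_mul hq0.ne' hx.ne']
    have hexp : Real.exp ((Real.log q + Real.log x) * Real.log xu / Real.log q)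
        = xu * Real.exp (Real.log x * Real.log xu / Real.log q) := by
      rw [show xu = Real.exp (Real.log xu) from (Real.exp_log hxu).symm, ← Real.exp_add]
      congr 1
      rw [Real.exp_log hxu]
      field_simp
    rw [hexp]
    have he := Real.exp_pos (Real.log x * Real.log xu / Real.log q)
    field_simp
    rw [tprod_congr (fun j : ℕ => show 1 + xu ^ 2 * √q * x * q ^ j = 1 + √q * x * xu ^ 2 * q ^ j by ring)]
    exact mul_inv_cancel₀ hPpos.ne'
  · show Real.exp (Real.log x * Real.log (Real.sqrt q * xu) / Real.log q) *
        (∏' j : ℕ, (1 + Real.sqrt q * x * (Real.sqrt q * xu) ^ 2 * q ^ j)) /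
      (Real.exp (Real.log x * Real.log xu / Real.log q) *
        (∏' j : ℕ, (1 + Real.sqrt q * x * xu ^ 2 * q ^ j))) = _
    rw [hfac2, Real.log_mul (Real.sqrt_pos.2 hq0).ne' hxu.ne', Real.log_sqrt hq0.le]
    have hexp : Real.exp (Real.log x * (Real.log q / 2 + Real.log xu) / Real.log q)
        = Real.sqrt x * Real.exp (Real.log x * Real.log xu / Real.log q) := by
      rw [show Real.sqrt x = Real.exp (Real.log x / 2) by
        rw [← Real.log_sqrt hx.le, Real.exp_log (Real.sqrt_pos.2 hx)], ← Real.exp_add]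
      congr 1
      field_simp
    rw [hexp]
    have he := Real.exp_pos (Real.log x * Real.log xu / Real.log q)
    have hsx := Real.sqrt_pos.2 hx
    field_simp
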